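/- For a > 0 and b ∈ ℝ with a² + b² = 1/4, the function φ_{a,b}(q) = (2a/π)^{1/4} e^{-(a+ib)q²} satisfies |φ_{a,b}(p)| = |φ̂_{a,b}(p)| for all p ∈ ℝ. -/

import Mathlib

/-- The Gaussian `φ_{a,b}(q) = (2a/π)^{1/4} e^{-(a+ib)q²}`. -/
noncomputable def phiG (a b : ℝ) (q : ℝ) : ℂ :=
  (((2 * a / Real.pi) ^ ((1 : ℝ) / 4) : ℝ) : ℂ) * Complex.exp (-(a + b * Complex.I) * (q : ℂ) ^ 2)

/-- The Fourier transform with convention `φ̂(p) = (2π)^{-1/2} ∫ e^{-ipq} φ(q) dq`. -/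
noncomputable def fourierT (φ : ℝ → ℂ) (p : ℝ) : ℂ :=
  ((((2 * Real.pi) ^ (-(1 : ℝ) / 2) : ℝ)) : ℂ) *
    ∫ q : ℝ, Complex.exp (-(p * q) * Complex.I) * φ q

/-- For `a > 0`, `b ∈ ℝ` with `a² + b² = 1/4`, the function `φ_{a,b}` satisfies
`|φ_{a,b}(p)| = |φ̂_{a,b}(p)|` for all `p ∈ ℝ`. -/
theorem stmt10 (a b : ℝ) (ha : 0 < a) (hab : a ^ 2 + b ^ 2 = 1 / 4) (p : ℝ) :
    ‖phiG a b p‖ = ‖fourierT (phiG a b) p‖ := by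
  have hπ := Real.pi_pos
  set c : ℂ := (a : ℂ) + (b : ℂ) * Complex.I with hc_def
  have hc : 0 < c.re := by simp [hc_def, ha]
  have hnsq : Complex.normSq c = 1 / 4 := by
    rw [hc_def, Complex.normSq_add_mul_I, hab]
  have habs : ‖c‖ = 1 / 2 := by
    rw [Complex.norm_def, hnsq, show (1 / 4 : ℝ) = (1 / 2) ^ 2 by norm_num,
      Real.sqrt_sq (by norm_num)]
  set C : ℝ := (2 * a / Real.pi) ^ ((1 : ℝ) / 4) with hC
  have hC0 : 0 ≤ C := Real.rpow_nonneg (by positivity) _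
  have hint : (∫ q : ℝ, Complex.exp (-(↑p * ↑q) * Complex.I) * phiG a b q)
      = (C : ℂ) * ((↑Real.pi / c) ^ ((1 : ℂ) / 2) *
          Complex.exp (-(-p : ℂ) ^ 2 / (4 * c))) := by
    rw [show ((1:ℂ)/2) = (1/2 : ℂ) by norm_num,
      ← fourierIntegral_gaussian hc (-p : ℂ), ← MeasureTheory.integral_const_mul]
    congr 1; funext q
    rw [phiG, show (-(↑p * ↑q) * Complex.I : ℂ) = Complex.I * (-p : ℂ) * q by push_cast; ring,
      ← hc_def]
    ring
  have hre : ((-(-p : ℂ) ^ 2 / (4 * c)).re) = -a * p ^ 2 := by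
    rw [show (-(-p : ℂ) ^ 2 / (4 * c)) = Complex.ofReal (-(p ^ 2)) / (4 * c) by push_cast; ring,
      Complex.div_re]
    simp [hc_def, Complex.normSq_apply]
    rw [show ((p:ℂ) ^ 2).re = p ^ 2 by rw [← Complex.ofReal_pow, Complex.ofReal_re],
      show ((p:ℂ) ^ 2).im = 0 by rw [← Complex.ofReal_pow, Complex.ofReal_im]]
    rw [show 4 * a * (4 * a) + 4 * b * (4 * b) = 4 by nlinarith [hab]]
    ring
  have hrecpow : ‖((↑Real.pi / c) ^ ((1 : ℂ) / 2))‖ = (2 * Real.pi) ^ ((1:ℝ) / 2) := by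
    rw [show ((1:ℂ)/2) = (((1/2 : ℝ)) : ℂ) by norm_num, Complex.norm_cpow_real, norm_div,
      Complex.norm_of_nonneg hπ.le, habs, show Real.pi / (1/2) = 2 * Real.pi by ring]
  have hlhs : ‖phiG a b p‖ = C * Real.exp (-a * p ^ 2) := by
    rw [phiG]
    rw [norm_mul, Complex.norm_real, Real.norm_of_nonneg hC0,
      Complex.norm_exp]
    congr 1
    simp [Complex.mul_re]
    rw [show ((p:ℂ) ^ 2).re = p ^ 2 by rw [← Complex.ofReal_pow, Complex.ofReal_re],
      show ((p:ℂ) ^ 2).im = 0 by rw [← Complex.ofReal_pow, Complex.ofReal_im]]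
    ring
  rw [hlhs, fourierT, hint]
  rw [norm_mul, norm_mul, norm_mul, Complex.norm_real,
    Real.norm_of_nonneg (by positivity), Complex.norm_real, Real.norm_of_nonneg hC0,
    hrecpow,
    Complex.norm_exp, hre]
  rw [show (2 * Real.pi) ^ (-(1:ℝ)/2) * (C * ((2 * Real.pi) ^ ((1:ℝ)/2) * Real.exp (-a * p^2)))
      = ((2 * Real.pi) ^ (-(1:ℝ)/2) * (2 * Real.pi) ^ ((1:ℝ)/2)) * (C * Real.exp (-a * p^2))
      by ring, ← Real.rpow_add (by positivity)]
  norm_num
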